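/- Let F = {log f_n} be a superadditive sequence of positive continuous functions on a one-sided subshift X, and suppose μ is a shift-invariant Gibbs measure for F with pressure constant P. Then for every shift-invariant Borel probability measure m on X, h_m(σ_X) + lim_{n→∞} (1/n) ∫ log f_n dm ≤ P; i.e., the pressure constant of a Gibbs measure dominates the free energy of every invariant measure. -/

import Mathlib

open scoped Classical BigOperators
open Filter MeasureTheory

namespace Paper

/-- Points of the full one-sided shift over `k` symbols. -/
abbrev Pt (k : ℕ) := ℕ → Fin k

variable {k : ℕ}

/-- The one-sided shift map. -/
def shift (x : Pt k) : Pt k := fun n => x (n + 1)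

/-- A one-sided subshift: a closed shift-invariant subset. -/
def IsSubshift (X : Set (Pt k)) : Prop := IsClosed X ∧ ∀ x ∈ X, shift x ∈ X

/-- The cylinder set `[u]` of a word `u` of length `n` inside `X`. -/
def cylinder (X : Set (Pt k)) {n : ℕ} (u : Fin n → Fin k) : Set (Pt k) :=
  {x | x ∈ X ∧ ∀ i : Fin n, x (i : ℕ) = u i}

/-- A word is allowable if its cylinder in `X` is nonempty. -/
def Allowable (X : Set (Pt k)) {n : ℕ} (u : Fin n → Fin k) : Prop :=
  (cylinder X u).Nonempty

/-- `B_n(X)`: the finite set of allowable words of length `n`. -/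
noncomputable def words (X : Set (Pt k)) (n : ℕ) : Finset (Fin n → Fin k) :=
  Finset.univ.filter fun u => Allowable X u

/-- `F_n(u)`: words `v` of length `n` with `uv` allowable. -/
noncomputable def Fext (X : Set (Pt k)) {m : ℕ} (u : Fin m → Fin k) (n : ℕ) :
    Finset (Fin n → Fin k) :=
  Finset.univ.filter fun v => Allowable X (Fin.append u v)

/-- `P_n(u)`: words `v` of length `n` with `vu` allowable. -/
noncomputable def Pext (X : Set (Pt k)) {m : ℕ} (u : Fin m → Fin k) (n : ℕ) :
    Finset (Fin n → Fin k) :=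
  Finset.univ.filter fun v => Allowable X (Fin.append v u)

/-- `F = {log f_n}` is a sequence of positive continuous functions on `X`. -/
def GoodSeq (X : Set (Pt k)) (f : ℕ → Pt k → ℝ) : Prop :=
  ∀ n, ContinuousOn (f n) X ∧ ∀ x ∈ X, 0 < f n x

/-- The right balanced condition with constant `C` and threshold `K`. -/
def RightBalancedWith (X : Set (Pt k)) (f : ℕ → Pt k → ℝ) (C : ℝ) (K : ℕ) : Prop :=
  ∀ m n : ℕ, 0 < m → K ≤ n → ∀ u : Fin m → Fin k, u ∈ words X m →
    ∀ xu ∈ cylinder X u,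
    ∀ y : (Fin n → Fin k) → Pt k,
      (∀ v ∈ Fext X u n, y v ∈ cylinder X (Fin.append u v)) →
    ∀ z : (Fin n → Fin k) → Pt k,
      (∀ w ∈ words X n, z w ∈ cylinder X w) →
      1 / C ≤ (∑ v ∈ Fext X u n, f (m + n) (y v)) /
          (f m xu * ∑ w ∈ words X n, f n (z w)) ∧
      (∑ v ∈ Fext X u n, f (m + n) (y v)) /
          (f m xu * ∑ w ∈ words X n, f n (z w)) ≤ C

/-- The left balanced condition with constant `C` and threshold `K`. -/
def LeftBalancedWith (X : Set (Pt k)) (f : ℕ → Pt k → ℝ) (C : ℝ) (K : ℕ) : Prop :=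
  ∀ m n : ℕ, 0 < m → K ≤ n → ∀ u : Fin m → Fin k, u ∈ words X m →
    ∀ xu ∈ cylinder X u,
    ∀ y : (Fin n → Fin k) → Pt k,
      (∀ v ∈ Pext X u n, y v ∈ cylinder X (Fin.append v u)) →
    ∀ z : (Fin n → Fin k) → Pt k,
      (∀ w ∈ words X n, z w ∈ cylinder X w) →
      1 / C ≤ (∑ v ∈ Pext X u n, f (n + m) (y v)) /
          (f m xu * ∑ w ∈ words X n, f n (z w)) ∧
      (∑ v ∈ Pext X u n, f (n + m) (y v)) /
          (f m xu * ∑ w ∈ words X n, f n (z w)) ≤ C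

def RightBalanced (X : Set (Pt k)) (f : ℕ → Pt k → ℝ) : Prop :=
  ∃ C : ℝ, 1 ≤ C ∧ ∃ K : ℕ, 1 ≤ K ∧ RightBalancedWith X f C K

def LeftBalanced (X : Set (Pt k)) (f : ℕ → Pt k → ℝ) : Prop :=
  ∃ C : ℝ, 1 ≤ C ∧ ∃ K : ℕ, 1 ≤ K ∧ LeftBalancedWith X f C K

def Balanced (X : Set (Pt k)) (f : ℕ → Pt k → ℝ) : Prop :=
  RightBalanced X f ∧ LeftBalanced X f

/-- Boundedly supermultiplicative with constant `C` and threshold `K`. -/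
def BSMWith (X : Set (Pt k)) (f : ℕ → Pt k → ℝ) (C : ℝ) (K : ℕ) : Prop :=
  ∀ m n : ℕ, 0 < m → K ≤ n →
    ∀ a : (Fin m → Fin k) → Pt k, (∀ u ∈ words X m, a u ∈ cylinder X u) →
    ∀ b : (Fin n → Fin k) → Pt k, (∀ v ∈ words X n, b v ∈ cylinder X v) →
    ∀ c : (Fin (m + n) → Fin k) → Pt k, (∀ w ∈ words X (m + n), c w ∈ cylinder X w) →
      1 / C ≤ ((∑ u ∈ words X m, f m (a u)) * (∑ v ∈ words X n, f n (b v))) /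
          (∑ w ∈ words X (m + n), f (m + n) (c w)) ∧
      ((∑ u ∈ words X m, f m (a u)) * (∑ v ∈ words X n, f n (b v))) /
          (∑ w ∈ words X (m + n), f (m + n) (c w)) ≤ C

def BSM (X : Set (Pt k)) (f : ℕ → Pt k → ℝ) : Prop :=
  ∃ C : ℝ, 1 ≤ C ∧ ∃ K : ℕ, 1 ≤ K ∧ BSMWith X f C K

/-- The Gibbs inequality for `μ` with pressure constant `P` and constant `C`. -/
def GibbsWith (X : Set (Pt k)) (f : ℕ → Pt k → ℝ) (μ : Measure (Pt k)) (P C : ℝ) : Prop :=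
  ∀ n : ℕ, 0 < n → ∀ u : Fin n → Fin k, u ∈ words X n → ∀ x ∈ cylinder X u,
    1 / C ≤ (μ (cylinder X u)).toReal / (Real.exp (-(n : ℝ) * P) * f n x) ∧
    (μ (cylinder X u)).toReal / (Real.exp (-(n : ℝ) * P) * f n x) ≤ C

/-- `μ` is a (Borel probability) Gibbs measure on `X` for the sequence `f`. -/
def IsGibbs (X : Set (Pt k)) (f : ℕ → Pt k → ℝ) (μ : Measure (Pt k)) : Prop :=
  IsProbabilityMeasure μ ∧ μ Xᶜ = 0 ∧ ∃ P C : ℝ, 0 < C ∧ GibbsWith X f μ P C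

/-- Shift invariance of a measure. -/
def InvariantM (μ : Measure (Pt k)) : Prop :=
  ∀ s : Set (Pt k), MeasurableSet s → μ (shift ⁻¹' s) = μ s

/-- Ergodicity of a measure with respect to the shift. -/
def ErgodicM (μ : Measure (Pt k)) : Prop :=
  ∀ s : Set (Pt k), MeasurableSet s → shift ⁻¹' s = s → μ s = 0 ∨ μ s = 1

/-- Subadditivity of the sequence with constant `C`. -/
def SubaddWith (X : Set (Pt k)) (f : ℕ → Pt k → ℝ) (C : ℝ) : Prop :=
  0 ≤ C ∧ ∀ x ∈ X, ∀ m n : ℕ, f (m + n) x ≤ Real.exp C * (f m x * f n (shift^[m] x))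

def Subadditive (X : Set (Pt k)) (f : ℕ → Pt k → ℝ) : Prop := ∃ C, SubaddWith X f C

/-- Superadditivity of the sequence with constant `C`. -/
def SuperaddWith (X : Set (Pt k)) (f : ℕ → Pt k → ℝ) (C : ℝ) : Prop :=
  0 ≤ C ∧ ∀ x ∈ X, ∀ m n : ℕ, Real.exp (-C) * (f m x * f n (shift^[m] x)) ≤ f (m + n) x

def Superadditive (X : Set (Pt k)) (f : ℕ → Pt k → ℝ) : Prop := ∃ C, SuperaddWith X f C

/-- Bounded variation with constant `M`. -/
def BddVarWith (X : Set (Pt k)) (f : ℕ → Pt k → ℝ) (M : ℝ) : Prop :=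
  1 ≤ M ∧ ∀ n : ℕ, ∀ x ∈ X, ∀ y ∈ X, (∀ i < n, x i = y i) → f n x / f n y ≤ M

def BddVar (X : Set (Pt k)) (f : ℕ → Pt k → ℝ) : Prop := ∃ M, BddVarWith X f M

/-- The partition sums `Z_n(F)`. -/
noncomputable def Zn (X : Set (Pt k)) (f : ℕ → Pt k → ℝ) (n : ℕ) : ℝ :=
  ∑ u ∈ words X n, sSup (f n '' cylinder X u)

/-- The topological pressure `P(F) = limsup (1/n) log Z_n(F)`. -/
noncomputable def pressure (X : Set (Pt k)) (f : ℕ → Pt k → ℝ) : ℝ :=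
  Filter.limsup (fun n : ℕ => Real.log (Zn X f n) / n) atTop

/-- Condition (C2): quasi-multiplicativity. -/
def QuasiMult (X : Set (Pt k)) (f : ℕ → Pt k → ℝ) : Prop :=
  ∃ k₀ : ℕ, ∃ D : ℝ, 0 < D ∧ D < 1 ∧
    ∀ (m n : ℕ) (u : Fin m → Fin k) (v : Fin n → Fin k),
      Allowable X u → Allowable X v →
      ∃ i, i ≤ k₀ ∧ ∃ w : Fin i → Fin k,
        Allowable X (Fin.append (Fin.append u w) v) ∧
        D * sSup (f m '' cylinder X u) * sSup (f n '' cylinder X v) ≤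
          sSup (f (m + i + n) '' cylinder X (Fin.append (Fin.append u w) v))

/-- Strong specification property with specification number `s`. -/
def StrongSpec (X : Set (Pt k)) (s : ℕ) : Prop :=
  ∀ (m n : ℕ) (u : Fin m → Fin k) (v : Fin n → Fin k),
    Allowable X u → Allowable X v →
    ∃ w : Fin s → Fin k, Allowable X (Fin.append (Fin.append u w) v)

/-- Irreducibility of a subshift. -/
def IrreducibleShift (X : Set (Pt k)) : Prop :=
  ∀ (m n : ℕ) (u : Fin m → Fin k) (v : Fin n → Fin k),
    Allowable X u → Allowable X v →
    ∃ (l : ℕ) (w : Fin l → Fin k), Allowable X (Fin.append (Fin.append u w) v)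

/-- The `n`-th partition entropy of `μ`. -/
noncomputable def Hn (X : Set (Pt k)) (μ : Measure (Pt k)) (n : ℕ) : ℝ :=
  -∑ u ∈ words X n, (μ (cylinder X u)).toReal * Real.log (μ (cylinder X u)).toReal

/-- Measure-theoretic entropy of an invariant measure on a subshift. -/
noncomputable def entropy (X : Set (Pt k)) (μ : Measure (Pt k)) : ℝ :=
  ⨅ n : ℕ, Hn X μ (n + 1) / (n + 1)

/-- The key partition-sum bound appearing in Lemma 2.2. -/
def KeyBound (X : Set (Pt k)) (f : ℕ → Pt k → ℝ) (C P : ℝ) : Prop :=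
  ∀ n : ℕ, 0 < n → ∀ z : (Fin n → Fin k) → Pt k,
    (∀ u ∈ words X n, z u ∈ cylinder X u) →
    1 / C ≤ Real.exp ((n : ℝ) * P) / (∑ u ∈ words X n, f n (z u)) ∧
    Real.exp ((n : ℝ) * P) / (∑ u ∈ words X n, f n (z u)) ≤ C



-- ===== auxiliary lemmas =====

lemma measurableSet_cylinder' (X : Set (Pt k)) (hX : IsClosed X) {n : ℕ} (u : Fin n → Fin k) :
    MeasurableSet (cylinder X u) := by
  have : cylinder X u = X ∩ ⋂ i : Fin n, (fun x : Pt k => x (i : ℕ)) ⁻¹' {u i} := by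
    ext x; simp [cylinder, Set.mem_iInter]
  rw [this]
  exact hX.measurableSet.inter (MeasurableSet.iInter fun i =>
    (measurable_pi_apply _) (measurableSet_singleton _))

lemma cylinder_disjoint' (X : Set (Pt k)) {n : ℕ} {u v : Fin n → Fin k} (h : u ≠ v) :
    Disjoint (cylinder X u) (cylinder X v) := by
  rw [Set.disjoint_left]
  rintro x ⟨_, hu⟩ ⟨_, hv⟩
  exact h (funext fun i => (hu i).symm.trans (hv i))

lemma sum_measure_cylinders (X : Set (Pt k)) (hX : IsClosed X) (n : ℕ)
    (μ : Measure (Pt k)) [IsProbabilityMeasure μ] (hsupp : μ Xᶜ = 0) :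
    ∑ u ∈ words X n, (μ (cylinder X u)).toReal = 1 := by
  have hXfull : μ X = 1 := by
    have := measure_add_measure_compl (μ := μ) hX.measurableSet
    rw [hsupp, add_zero] at this; simpa using this
  have hcover : X = ⋃ u ∈ (Finset.univ : Finset (Fin n → Fin k)), cylinder X u := by
    ext x; constructor
    · intro hx
      exact Set.mem_biUnion (Finset.mem_univ (fun i : Fin n => x (i : ℕ)))
        ⟨hx, fun i => rfl⟩
    · rintro hx
      simp only [Set.mem_iUnion] at hx
      obtain ⟨u, _, hx, _⟩ := hx; exact hx
  have hsum : ∑ u ∈ (Finset.univ : Finset (Fin n → Fin k)), μ (cylinder X u) = 1 := by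
    rw [← measure_biUnion_finset ?_ (fun u _ => measurableSet_cylinder' X hX u), ← hcover, hXfull]
    intro u _ v _ huv
    exact cylinder_disjoint' X huv
  have hsum2 : ∑ u ∈ words X n, μ (cylinder X u) = 1 := by
    rw [← hsum]
    apply Finset.sum_subset (Finset.subset_univ _)
    intro u _ hu
    have : cylinder X u = ∅ := by
      by_contra h
      exact hu (by simp [words, Allowable, Set.nonempty_iff_ne_empty, h])
    simp [this]
  have := congrArg ENNReal.toReal hsum2
  rw [ENNReal.toReal_sum (fun u _ => measure_ne_top μ _)] at this; simpa using this

lemma key_term (p a : ℝ) (hp : 0 ≤ p) (ha : 0 < a) :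
    p * Real.log a - p * Real.log p ≤ a := by
  rcases eq_or_lt_of_le hp with h | hp
  · simp [← h]; positivity
  · have h1 : Real.log a - Real.log p = Real.log (a / p) := (Real.log_div ha.ne' hp.ne').symm
    have h2 : Real.log (a / p) ≤ a / p - 1 := Real.log_le_sub_one_of_pos (by positivity)
    calc p * Real.log a - p * Real.log p = p * (Real.log (a/p)) := by rw [← h1]; ring
      _ ≤ p * (a/p - 1) := by nlinarith
      _ = a - p := by field_simp
      _ ≤ a := by linarith

-- ===== end auxiliary lemmas =====

/-- the pressure constant of an invariant Gibbs measure for a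
superadditive sequence dominates the free energy of every invariant measure. -/
theorem stmt15 {k : ℕ} (X : Set (Pt k)) (f : ℕ → Pt k → ℝ)
    (hX : IsSubshift X) (hf : GoodSeq X f) (hsup : Superadditive X f)
    (μ : Measure (Pt k)) (hμprob : IsProbabilityMeasure μ) (hμsupp : μ Xᶜ = 0)
    (hμinv : InvariantM μ)
    (P C' : ℝ) (hC' : 0 < C') (hGibbs : GibbsWith X f μ P C') :
    ∀ m : Measure (Pt k), IsProbabilityMeasure m → m Xᶜ = 0 → InvariantM m →
      ∀ L : ℝ,
        Filter.Tendsto (fun n : ℕ => (∫ x, Real.log (f n x) ∂m) / n)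
          Filter.atTop (nhds L) →
        entropy X m + L ≤ P := by
  intro m hm hmsupp hminv L hL
  have hXc : IsCompact X := hX.1.isCompact
  have hXmeas : MeasurableSet X := hX.1.measurableSet
  have hXne : X.Nonempty := by
    rcases Set.eq_empty_or_nonempty X with h | h
    · exfalso
      have h0 : m Set.univ = 0 := by simpa [h] using hmsupp
      simp [measure_univ] at h0
    · exact h
  have haeX : ∀ᵐ x ∂m, x ∈ X := by
    rw [MeasureTheory.ae_iff]
    simpa [Set.compl_def] using hmsupp
  -- Key per-n bound : Hₙ(m) + ∫ log fₙ dm ≤ n P + C'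
  have key : ∀ n : ℕ, 0 < n →
      Hn X m n + (∫ x, Real.log (f n x) ∂m) ≤ (n : ℝ) * P + C' := by
    intro n hn
    -- maximizers of f n on each cylinder
    have hx : ∀ u : Fin n → Fin k, ∃ x, u ∈ words X n →
        x ∈ cylinder X u ∧ ∀ y ∈ cylinder X u, f n y ≤ f n x := by
      intro u
      by_cases hu : u ∈ words X n
      swap
      · exact ⟨hXne.some, fun h => absurd h hu⟩
      have hne : (cylinder X u).Nonempty := by
        exact (Finset.mem_filter.mp hu).2
      have hcl : IsClosed (cylinder X u) := by
        have : cylinder X u = X ∩ ⋂ i : Fin n, (fun x : Pt k => x (i : ℕ)) ⁻¹' {u i} := by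
          ext x; simp [cylinder, Set.mem_iInter]
        rw [this]
        exact hX.1.inter (isClosed_iInter fun i =>
          (IsClosed.preimage (continuous_apply _) isClosed_singleton))
      have hcomp : IsCompact (cylinder X u) := hcl.isCompact
      have hcont : ContinuousOn (f n) (cylinder X u) := (hf n).1.mono (fun x hx => hx.1)
      obtain ⟨x, hx1, hx2⟩ := hcomp.exists_isMaxOn hne hcont
      exact ⟨x, fun _ => ⟨hx1, hx2⟩⟩
    choose xmax hxmax using hx
    have hmem : ∀ u ∈ words X n, xmax u ∈ cylinder X u := fun u hu => (hxmax u hu).1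
    have hmax : ∀ u ∈ words X n, ∀ y ∈ cylinder X u, f n y ≤ f n (xmax u) :=
      fun u hu => (hxmax u hu).2
    have hpos : ∀ u ∈ words X n, 0 < f n (xmax u) := fun u hu => (hf n).2 _ ((hmem u hu).1)
    have hsumμ : ∑ u ∈ words X n, (μ (cylinder X u)).toReal = 1 :=
      sum_measure_cylinders X hX.1 n μ hμsupp
    have hsumm : ∑ u ∈ words X n, (m (cylinder X u)).toReal = 1 :=
      sum_measure_cylinders X hX.1 n m hmsupp
    set S : ℝ := ∑ u ∈ words X n, (m (cylinder X u)).toReal * Real.log (f n (xmax u)) with hS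
    -- Part A: Hn + S ≤ n P + C'
    have ha_le : ∀ u ∈ words X n,
        Real.exp (-(n : ℝ) * P) * f n (xmax u) ≤ C' * (μ (cylinder X u)).toReal := by
      intro u hu
      have h := (hGibbs n hn u hu (xmax u) (hmem u hu)).1
      have hd : 0 < Real.exp (-(n : ℝ) * P) * f n (xmax u) := by
        have := hpos u hu; positivity
      rw [le_div_iff₀ hd] at h
      calc Real.exp (-(n : ℝ) * P) * f n (xmax u)
          = C' * (1 / C' * (Real.exp (-(n : ℝ) * P) * f n (xmax u))) := by field_simp
        _ ≤ C' * (μ (cylinder X u)).toReal := mul_le_mul_of_nonneg_left h hC'.le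
    have hA : Hn X m n + S ≤ (n : ℝ) * P + C' := by
      have hterm : ∀ u ∈ words X n,
          (m (cylinder X u)).toReal * Real.log (Real.exp (-(n : ℝ) * P) * f n (xmax u))
            - (m (cylinder X u)).toReal * Real.log (m (cylinder X u)).toReal
            ≤ C' * (μ (cylinder X u)).toReal := by
        intro u hu
        refine le_trans (key_term _ _ ENNReal.toReal_nonneg ?_) (ha_le u hu)
        have := hpos u hu; positivity
      have hsum := Finset.sum_le_sum hterm
      rw [Finset.sum_sub_distrib] at hsum
      have hlog : ∀ u ∈ words X n,
          Real.log (Real.exp (-(n : ℝ) * P) * f n (xmax u))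
            = -(n : ℝ) * P + Real.log (f n (xmax u)) := by
        intro u hu
        rw [Real.log_mul (Real.exp_pos _).ne' (hpos u hu).ne', Real.log_exp]
      have e1 : ∑ u ∈ words X n,
          (m (cylinder X u)).toReal * Real.log (Real.exp (-(n : ℝ) * P) * f n (xmax u))
            = -(n : ℝ) * P + S := by
        rw [Finset.sum_congr rfl (fun u hu => by rw [hlog u hu])]
        have : ∑ u ∈ words X n,
            (m (cylinder X u)).toReal * (-(n : ℝ) * P + Real.log (f n (xmax u)))
              = (-(n : ℝ) * P) * (∑ u ∈ words X n, (m (cylinder X u)).toReal) + S := by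
          rw [hS, Finset.mul_sum, ← Finset.sum_add_distrib]
          exact Finset.sum_congr rfl fun u hu => by ring
        rw [this, hsumm, mul_one]
      have e2 : ∑ u ∈ words X n, C' * (μ (cylinder X u)).toReal = C' := by
        rw [← Finset.mul_sum, hsumμ, mul_one]
      rw [e1, e2] at hsum
      have hHn : Hn X m n
          = -∑ u ∈ words X n, (m (cylinder X u)).toReal * Real.log (m (cylinder X u)).toReal :=
        rfl
      rw [hHn]; linarith [hsum]
    -- Part B: ∫ log f n dm ≤ S
    have hB : (∫ x, Real.log (f n x) ∂m) ≤ S := by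
      set g : Pt k → ℝ := fun x => ∑ u ∈ words X n,
        Set.indicator (cylinder X u) (fun _ => Real.log (f n (xmax u))) x with hg
      have hmeas_cyl : ∀ u : Fin n → Fin k, MeasurableSet (cylinder X u) :=
        fun u => measurableSet_cylinder' X hX.1 u
      have hint_g : Integrable g m := by
        apply integrable_finset_sum
        intro u _
        exact (integrable_const _).indicator (hmeas_cyl u)
      have hint_gS : (∫ x, g x ∂m) = S := by
        have hgeq : (∫ x, g x ∂m) = ∫ x, ∑ u ∈ words X n,
            Set.indicator (cylinder X u) (fun _ => Real.log (f n (xmax u))) x ∂m := rfl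
        rw [hgeq,
          integral_finset_sum _ (fun u _ => (integrable_const _).indicator (hmeas_cyl u))]
        refine Finset.sum_congr rfl fun u _ => ?_
        rw [integral_indicator_const _ (hmeas_cyl u), smul_eq_mul]
        rfl
      -- integrability of log ∘ f n
      obtain ⟨xM, hxMX, hxM⟩ := hXc.exists_isMaxOn hXne (hf n).1
      obtain ⟨xm0, hxm0X, hxm0⟩ := hXc.exists_isMinOn hXne (hf n).1
      set B : ℝ := max |Real.log (f n xm0)| |Real.log (f n xM)| with hBdef
      have habs : ∀ x ∈ X, ‖Real.log (f n x)‖ ≤ B := by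
        intro x hxX
        have h1 : f n xm0 ≤ f n x := hxm0 hxX
        have h2 : f n x ≤ f n xM := hxM hxX
        have hp0 : 0 < f n xm0 := (hf n).2 _ hxm0X
        have hpx : 0 < f n x := (hf n).2 _ hxX
        have l1 : Real.log (f n xm0) ≤ Real.log (f n x) := Real.log_le_log hp0 h1
        have l2 : Real.log (f n x) ≤ Real.log (f n xM) := Real.log_le_log hpx h2
        rw [Real.norm_eq_abs, abs_le]
        constructor
        · calc -B ≤ -|Real.log (f n xm0)| := by
                have : |Real.log (f n xm0)| ≤ B := le_max_left _ _
                linarith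
            _ ≤ Real.log (f n xm0) := neg_abs_le _
            _ ≤ _ := l1
        · calc Real.log (f n x) ≤ Real.log (f n xM) := l2
            _ ≤ |Real.log (f n xM)| := le_abs_self _
            _ ≤ B := le_max_right _ _
      have hmr : m.restrict X = m := Measure.restrict_eq_self_of_ae_mem haeX
      have hcontlog : ContinuousOn (fun x => Real.log (f n x)) X := by
        apply Real.continuousOn_log.comp (hf n).1
        intro x hxX
        simp only [Set.mem_compl_iff, Set.mem_singleton_iff]
        exact ((hf n).2 x hxX).ne'
      have hasm : AEStronglyMeasurable (fun x => Real.log (f n x)) m := by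
        rw [← hmr]
        exact hcontlog.aestronglyMeasurable hXmeas
      have hint_f : Integrable (fun x => Real.log (f n x)) m := by
        apply Integrable.mono' (integrable_const B) hasm
        filter_upwards [haeX] with x hxX
        exact habs x hxX
      -- a.e. pointwise bound log f n ≤ g
      have hae_le : ∀ᵐ x ∂m, Real.log (f n x) ≤ g x := by
        filter_upwards [haeX] with x hxX
        set u₀ : Fin n → Fin k := fun i => x (i : ℕ) with hu₀
        have hx0 : x ∈ cylinder X u₀ := ⟨hxX, fun i => rfl⟩
        have hu0 : u₀ ∈ words X n := by
          simp only [words, Finset.mem_filter, Finset.mem_univ, true_and]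
          exact ⟨x, hx0⟩
        have hgx : g x = Real.log (f n (xmax u₀)) := by
          have hgeq : g x = ∑ u ∈ words X n,
              Set.indicator (cylinder X u) (fun _ => Real.log (f n (xmax u))) x := rfl
          rw [hgeq, Finset.sum_eq_single_of_mem u₀ hu0]
          · exact Set.indicator_of_mem hx0 _
          · intro v hv hvne
            apply Set.indicator_of_notMem
            intro hxv
            exact hvne (funext fun i => (hxv.2 i).symm.trans (hx0.2 i))
        rw [hgx]
        exact Real.log_le_log ((hf n).2 x hxX) (hmax u₀ hu0 x hx0)
      calc (∫ x, Real.log (f n x) ∂m) ≤ ∫ x, g x ∂m := integral_mono_ae hint_f hint_g hae_le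
        _ = S := hint_gS
    linarith [hA, hB]
  -- Entropy ≤ Hn / n
  have hHn_nonneg : ∀ j : ℕ, 0 ≤ Hn X m j := by
    intro j
    have : ∑ u ∈ words X j, (m (cylinder X u)).toReal * Real.log (m (cylinder X u)).toReal ≤ 0 := by
      apply Finset.sum_nonpos
      intro u _
      have hp : (0:ℝ) ≤ (m (cylinder X u)).toReal := ENNReal.toReal_nonneg
      have hp1 : (m (cylinder X u)).toReal ≤ 1 := by
        have h1 : m (cylinder X u) ≤ 1 := prob_le_one
        calc (m (cylinder X u)).toReal ≤ (1 : ENNReal).toReal :=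
              ENNReal.toReal_mono ENNReal.one_ne_top h1
          _ = 1 := by simp
      have hlog : Real.log (m (cylinder X u)).toReal ≤ 0 := Real.log_nonpos hp hp1
      exact mul_nonpos_iff.mpr (Or.inl ⟨hp, hlog⟩)
    have hHn : Hn X m j
        = -∑ u ∈ words X j, (m (cylinder X u)).toReal * Real.log (m (cylinder X u)).toReal := rfl
    rw [hHn]; linarith
  have hbdd : BddBelow (Set.range fun j : ℕ => Hn X m (j + 1) / ((j : ℝ) + 1)) := by
    refine ⟨0, ?_⟩
    rintro _ ⟨j, rfl⟩
    exact div_nonneg (hHn_nonneg _) (by positivity)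
  have hent : ∀ j : ℕ, entropy X m ≤ Hn X m (j + 1) / ((j : ℝ) + 1) := by
    intro j
    exact ciInf_le hbdd j
  -- eventual bound
  have hev : ∀ᶠ n : ℕ in atTop,
      entropy X m + (∫ x, Real.log (f n x) ∂m) / (n : ℝ) ≤ P + C' / (n : ℝ) := by
    filter_upwards [eventually_ge_atTop 1] with n hn1
    have hn0 : (0:ℝ) < (n : ℝ) := by exact_mod_cast hn1
    have h1 : entropy X m ≤ Hn X m n / (n : ℝ) := by
      obtain ⟨j, rfl⟩ : ∃ j, n = j + 1 := ⟨n - 1, (Nat.succ_pred_eq_of_pos hn1).symm⟩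
      have := hent j
      rwa [show ((j : ℝ) + 1) = ((j + 1 : ℕ) : ℝ) by push_cast; ring] at this
    have h2 := key n hn1
    calc entropy X m + (∫ x, Real.log (f n x) ∂m) / (n : ℝ)
        ≤ Hn X m n / (n : ℝ) + (∫ x, Real.log (f n x) ∂m) / (n : ℝ) :=
          by linarith [h1]
      _ = (Hn X m n + (∫ x, Real.log (f n x) ∂m)) / (n : ℝ) := (add_div _ _ _).symm
      _ ≤ ((n : ℝ) * P + C') / (n : ℝ) := by gcongr
      _ = P + C' / (n : ℝ) := by field_simp
  have hlim1 : Tendsto (fun n : ℕ => entropy X m + (∫ x, Real.log (f n x) ∂m) / (n : ℝ))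
      atTop (nhds (entropy X m + L)) := tendsto_const_nhds.add hL
  have hlim2 : Tendsto (fun n : ℕ => P + C' / (n : ℝ)) atTop (nhds P) := by
    have := tendsto_const_div_atTop_nhds_zero_nat C'
    simpa using tendsto_const_nhds.add this
  exact le_of_tendsto_of_tendsto hlim1 hlim2 hev

end Paper
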